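/- arXiv:1905.06117 — 3 statements merged into one kernel-verified Lean document; each statement's English description precedes it below -/
import Mathlib

section
/- Order relation forced by the contact condition: let h₁, h₂, h₃ ∈ ℂ⟦X⟧ be formal power series with h₁, h₂ nonzero of finite orders a₁ = ord(h₁), a₂ = ord(h₂) satisfying 0 < a₁ < a₂, suppose the order of h₃ is positive (zero constant term), and suppose h₃' = h₂·h₁' − h₁·h₂'. Then h₃ ≠ 0 and ord(h₃) = a₁ + a₂. -/
open PowerSeries

lemma coeff_mul_add_aux (φ ψ : PowerSeries ℂ) (m n : ℕ)
    (hφ : ∀ i < m, PowerSeries.coeff i φ = 0)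
    (hψ : ∀ j < n, PowerSeries.coeff j ψ = 0) :
    PowerSeries.coeff (m + n) (φ * ψ) =
      PowerSeries.coeff m φ * PowerSeries.coeff n ψ := by
  rw [PowerSeries.coeff_mul]
  rw [Finset.sum_eq_single (m, n)]
  · intro b hb hne
    rw [Finset.HasAntidiagonal.mem_antidiagonal] at hb
    rcases lt_or_ge b.1 m with h | h
    · rw [hφ b.1 h, zero_mul]
    · have : b.2 < n := by
        rcases lt_or_eq_of_le h with h' | h'
        · omega
        · exfalso; apply hne; rw [Prod.ext_iff]; constructor <;> simp <;> omega
      rw [hψ b.2 this, mul_zero]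
  · intro h
    exfalso; apply h; rw [Finset.HasAntidiagonal.mem_antidiagonal]

/-- Order relation forced by the contact condition `h₃' = h₂h₁' − h₁h₂'` (the 
curve `[1, h₁, h₂, h₃]` is tangent to the contact distribution of the symplectic 
form `ξ₀∧ξ₃ + ξ₁∧ξ₂`): if `0 < ord(h₁) < ord(h₂)` and `h₃` has zero constant 
term, then `h₃ ≠ 0` and `ord(h₃) = ord(h₁) + ord(h₂)`. -/
theorem order_add_of_contact (h₁ h₂ h₃ : PowerSeries ℂ)
    (h1ne : h₁ ≠ 0) (h2ne : h₂ ≠ 0)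
    (h1pos : 0 < h₁.order) (h12 : h₁.order < h₂.order)
    (h3const : PowerSeries.constantCoeff h₃ = 0)
    (heq : PowerSeries.derivative ℂ h₃ =
      h₂ * PowerSeries.derivative ℂ h₁ - h₁ * PowerSeries.derivative ℂ h₂) :
    h₃ ≠ 0 ∧ h₃.order = h₁.order + h₂.order := by
  have hfin₁ : h₁.order ≠ ⊤ := (order_finite_iff_ne_zero.mpr h1ne).ne
  have hfin₂ : h₂.order ≠ ⊤ := (order_finite_iff_ne_zero.mpr h2ne).ne
  obtain ⟨a₁, ha₁⟩ := WithTop.ne_top_iff_exists.mp hfin₁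
  obtain ⟨a₂, ha₂⟩ := WithTop.ne_top_iff_exists.mp hfin₂
  rw [← ha₁] at h1pos h12 ⊢
  rw [← ha₂] at h12 ⊢
  have ha1pos : 0 < a₁ := by
    by_contra h
    rw [show a₁ = 0 by omega] at h1pos
    exact (lt_irrefl _ h1pos).elim
  have ha12 : a₁ < a₂ := by
    by_contra h
    exact absurd h12 (not_lt.mpr (ENat.coe_le_coe.mpr (not_lt.mp h)))
  obtain ⟨hc₁, low₁⟩ := order_eq_nat.mp ha₁.symm
  obtain ⟨hc₂, low₂⟩ := order_eq_nat.mp ha₂.symm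
  -- orders of the derivative products
  have hd₁ : ∀ j < a₁ - 1, PowerSeries.coeff j (PowerSeries.derivative ℂ h₁) = 0 := by
    intro j hj
    rw [PowerSeries.coeff_derivative, low₁ (j + 1) (by omega), zero_mul]
  have hd₂ : ∀ j < a₂ - 1, PowerSeries.coeff j (PowerSeries.derivative ℂ h₂) = 0 := by
    intro j hj
    rw [PowerSeries.coeff_derivative, low₂ (j + 1) (by omega), zero_mul]
  -- all coefficients below a₁ + a₂ - 1 of the RHS vanish
  have hRHS0 : ∀ k < a₁ + a₂ - 1,
      PowerSeries.coeff k (h₂ * PowerSeries.derivative ℂ h₁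
        - h₁ * PowerSeries.derivative ℂ h₂) = 0 := by
    intro k hk
    have o₁ : ((a₁ + a₂ - 1 : ℕ) : ℕ∞) ≤ (h₂ * PowerSeries.derivative ℂ h₁).order := by
      refine le_trans ?_ (le_order_mul _ _)
      rw [← ha₂]
      calc ((a₁ + a₂ - 1 : ℕ) : ℕ∞) = ((a₂ : ℕ) : ℕ∞) + ((a₁ - 1 : ℕ) : ℕ∞) := by
            rw [← Nat.cast_add]; congr 1; omega
        _ ≤ (a₂ : ℕ∞) + (PowerSeries.derivative ℂ h₁).order := by
            gcongr
            exact nat_le_order _ _ hd₁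
    have o₂ : ((a₁ + a₂ - 1 : ℕ) : ℕ∞) ≤ (h₁ * PowerSeries.derivative ℂ h₂).order := by
      refine le_trans ?_ (le_order_mul _ _)
      rw [← ha₁]
      calc ((a₁ + a₂ - 1 : ℕ) : ℕ∞) = ((a₁ : ℕ) : ℕ∞) + ((a₂ - 1 : ℕ) : ℕ∞) := by
            rw [← Nat.cast_add]; congr 1; omega
        _ ≤ (a₁ : ℕ∞) + (PowerSeries.derivative ℂ h₂).order := by
            gcongr
            exact nat_le_order _ _ hd₂
    rw [map_sub, coeff_of_lt_order k (lt_of_lt_of_le (by exact_mod_cast hk) o₁),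
      coeff_of_lt_order k (lt_of_lt_of_le (by exact_mod_cast hk) o₂), sub_zero]
  -- all coefficients of h₃ below a₁ + a₂ vanish
  have hlow₃ : ∀ m < a₁ + a₂, PowerSeries.coeff m h₃ = 0 := by
    intro m hm
    cases m with
    | zero => rwa [PowerSeries.coeff_zero_eq_constantCoeff]
    | succ k =>
      have : PowerSeries.coeff k (PowerSeries.derivative ℂ h₃) = 0 := by
        rw [heq]; exact hRHS0 k (by omega)
      rw [PowerSeries.coeff_derivative] at this
      exact (mul_eq_zero.mp this).resolve_right (Nat.cast_add_one_ne_zero k)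
  -- the coefficient of h₃ at a₁ + a₂ is nonzero
  have key : PowerSeries.coeff (a₁ + a₂) h₃ ≠ 0 := by
    have hco : PowerSeries.coeff (a₁ + a₂ - 1) (PowerSeries.derivative ℂ h₃)
        = PowerSeries.coeff a₂ h₂ * PowerSeries.coeff a₁ h₁ * a₁
          - PowerSeries.coeff a₁ h₁ * PowerSeries.coeff a₂ h₂ * a₂ := by
      rw [heq, map_sub]
      have e₁ : a₁ + a₂ - 1 = a₂ + (a₁ - 1) := by omega
      have e₂ : a₁ + a₂ - 1 = a₁ + (a₂ - 1) := by omega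
      rw [show PowerSeries.coeff (a₁ + a₂ - 1) (h₂ * PowerSeries.derivative ℂ h₁)
            = PowerSeries.coeff (a₂ + (a₁ - 1)) (h₂ * PowerSeries.derivative ℂ h₁) by rw [← e₁],
        show PowerSeries.coeff (a₁ + a₂ - 1) (h₁ * PowerSeries.derivative ℂ h₂)
            = PowerSeries.coeff (a₁ + (a₂ - 1)) (h₁ * PowerSeries.derivative ℂ h₂) by rw [← e₂],
        coeff_mul_add_aux _ _ _ _ low₂ hd₁, coeff_mul_add_aux _ _ _ _ low₁ hd₂,
        PowerSeries.coeff_derivative, PowerSeries.coeff_derivative,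
        show a₁ - 1 + 1 = a₁ by omega, show a₂ - 1 + 1 = a₂ by omega,
        show ((a₁ - 1 : ℕ) : ℂ) + 1 = (a₁ : ℂ) by
          rw [← Nat.cast_add_one]; congr 1; omega,
        show ((a₂ - 1 : ℕ) : ℂ) + 1 = (a₂ : ℂ) by
          rw [← Nat.cast_add_one]; congr 1; omega]
      ring
    have hco' : PowerSeries.coeff (a₁ + a₂ - 1) (PowerSeries.derivative ℂ h₃)
        = PowerSeries.coeff (a₁ + a₂) h₃ * (a₁ + a₂ : ℕ) := by
      rw [PowerSeries.coeff_derivative, show a₁ + a₂ - 1 + 1 = a₁ + a₂ by omega,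
        show ((a₁ + a₂ - 1 : ℕ) : ℂ) + 1 = ((a₁ + a₂ : ℕ) : ℂ) by
          rw [← Nat.cast_add_one]; congr 1; omega]
    intro hzero
    rw [hco', hzero, zero_mul] at hco
    have := hco.symm
    have hne' : PowerSeries.coeff a₁ h₁ * PowerSeries.coeff a₂ h₂ * ((a₁ : ℂ) - a₂) ≠ 0 := by
      apply mul_ne_zero (mul_ne_zero hc₁ hc₂)
      intro h
      have : (a₁ : ℂ) = (a₂ : ℂ) := by linear_combination h
      exact absurd (Nat.cast_injective this) (Nat.ne_of_lt ha12)
    apply hne'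
    linear_combination this
  have hord : h₃.order = ((a₁ + a₂ : ℕ) : ℕ∞) :=
    order_eq_nat.mpr ⟨key, hlow₃⟩
  refine ⟨?_, ?_⟩
  · intro h
    rw [h] at key
    simp at key
  · rw [hord, Nat.cast_add]; rfl
end

section
/- Rational contact curves of every degree: let p, q be integers with 0 < p < q and let F = (1, X^p, X^q, X^{p+q}) : Fin 4 → ℂ[X]. Then F is a contact curve for the nondegenerate alternating bilinear form β on ℂ⁴ determined by β(e₀,e₃) = p − q, β(e₁,e₂) = p + q, and β(e₀,e₁) = β(e₀,e₂) = β(e₁,e₃) = β(e₂,e₃) = 0. Moreover the six minors of F are exactly W₀₁ = p·X^{p−1}, W₀₂ = q·X^{q−1}, W₀₃ = (p+q)·X^{p+q−1}, W₁₂ = (q−p)·X^{p+q−1}, W₁₃ = q·X^{2p+q−1}, W₂₃ = p·X^{p+2q−1}; in particular their gcd is X^{p−1} up to a nonzero constant and their maximal degree is p + 2q − 1 (so the total first ramification is (p−1) at 0 and (p−1) at infinity). -/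
open Polynomial Matrix

/-- The minor `W_ij = F_i·F_j' − F_j·F_i'` of a curve `F : Fin 4 → ℂ[X]`. -/
noncomputable def minor4 (F : Fin 4 → ℂ[X]) (i j : Fin 4) : ℂ[X] :=
  F i * derivative (F j) - F j * derivative (F i)

/-- `F` is a contact curve for the alternating bilinear form with matrix `B`. -/
noncomputable def IsContactCurve (B : Matrix (Fin 4) (Fin 4) ℂ) (F : Fin 4 → ℂ[X]) : Prop :=
  ∑ p ∈ Finset.univ.filter (fun p : Fin 4 × Fin 4 => p.1 < p.2),
    C (B p.1 p.2) * minor4 F p.1 p.2 = 0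

/-- The set of ordered index pairs `i < j` in `Fin 4`. -/
def pairs4 : Finset (Fin 4 × Fin 4) := Finset.univ.filter (fun p => p.1 < p.2)

lemma aux_pow (a b n : ℕ) (hb : 0 < b) (hn : n = a + b - 1) (c : ℂ) :
    X ^ a * (C c * X ^ (b - 1)) = C c * X ^ n := by
  rw [mul_left_comm, ← pow_add]
  congr 2
  omega

/-- Rational contact curves of every degree: `(1, X^p, X^q, X^{p+q})` with 
`0 < p < q` is a contact curve for the nondegenerate alternating form 
`(p−q) ξ₀∧ξ₃ + (p+q) ξ₁∧ξ₂`, with explicitly given minors, whose gcd is 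
`X^{p−1}` up to a nonzero constant and whose maximal degree is `p + 2q − 1`. -/
theorem rational_contact_curves_all_degrees (p q : ℕ) (hp : 0 < p) (hpq : p < q)
    (F : Fin 4 → ℂ[X]) (hF : F = ![1, X ^ p, X ^ q, X ^ (p + q)])
    (B : Matrix (Fin 4) (Fin 4) ℂ)
    (hB : B = !![0, 0, 0, (p : ℂ) - q;
                 0, 0, (p : ℂ) + q, 0;
                 0, -((p : ℂ) + q), 0, 0;
                 (q : ℂ) - p, 0, 0, 0]) :
    (Bᵀ = -B ∧ B.det ≠ 0 ∧ IsContactCurve B F) ∧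
    minor4 F 0 1 = C (p : ℂ) * X ^ (p - 1) ∧
    minor4 F 0 2 = C (q : ℂ) * X ^ (q - 1) ∧
    minor4 F 0 3 = C ((p : ℂ) + q) * X ^ (p + q - 1) ∧
    minor4 F 1 2 = C ((q : ℂ) - p) * X ^ (p + q - 1) ∧
    minor4 F 1 3 = C (q : ℂ) * X ^ (2 * p + q - 1) ∧
    minor4 F 2 3 = C (p : ℂ) * X ^ (p + 2 * q - 1) ∧
    (∃ c : ℂ, c ≠ 0 ∧ pairs4.gcd (fun r => minor4 F r.1 r.2) = C c * X ^ (p - 1)) ∧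
    pairs4.sup (fun r => (minor4 F r.1 r.2).natDegree) = p + 2 * q - 1 := by
  have hq : 0 < q := hp.trans hpq
  have hp0 : (p : ℂ) ≠ 0 := Nat.cast_ne_zero.2 hp.ne'
  have hq0 : (q : ℂ) ≠ 0 := Nat.cast_ne_zero.2 hq.ne'
  have hpq0 : (p : ℂ) + q ≠ 0 := by
    have : ((p + q : ℕ) : ℂ) ≠ 0 := Nat.cast_ne_zero.2 (by omega)
    push_cast at this; exact this
  have hqp0 : (q : ℂ) - p ≠ 0 := sub_ne_zero.2 fun h => hpq.ne' (Nat.cast_injective h)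
  have hpmq0 : (p : ℂ) - q ≠ 0 := sub_ne_zero.2 fun h => hpq.ne (Nat.cast_injective h)
  have hpqC : ((p + q : ℕ) : ℂ) = (p : ℂ) + q := by push_cast; ring
  have m01 : minor4 F 0 1 = C (p : ℂ) * X ^ (p - 1) := by
    simp [minor4, hF, derivative_X_pow]
  have m02 : minor4 F 0 2 = C (q : ℂ) * X ^ (q - 1) := by
    simp [minor4, hF, derivative_X_pow]
  have m03 : minor4 F 0 3 = C ((p : ℂ) + q) * X ^ (p + q - 1) := by
    simp [minor4, hF, derivative_X_pow, hpqC]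
  have m12 : minor4 F 1 2 = C ((q : ℂ) - p) * X ^ (p + q - 1) := by
    simp only [minor4, hF, Matrix.cons_val_one, Matrix.head_cons, Matrix.cons_val_two,
      Matrix.tail_cons, Matrix.cons_val_zero, derivative_X_pow]
    rw [aux_pow p q (p + q - 1) hq (by omega), aux_pow q p (p + q - 1) hp (by omega),
      ← sub_mul, ← C_sub]
  have m13 : minor4 F 1 3 = C (q : ℂ) * X ^ (2 * p + q - 1) := by
    simp only [minor4, hF, Matrix.cons_val_one, Matrix.head_cons, Matrix.cons_val_three,
      Matrix.tail_cons, Matrix.cons_val_zero, derivative_X_pow, hpqC]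
    rw [aux_pow p (p + q) (2 * p + q - 1) (by omega) (by omega),
      aux_pow (p + q) p (2 * p + q - 1) hp (by omega), ← sub_mul, ← C_sub]
    congr 1
    ring
  have m23 : minor4 F 2 3 = C (p : ℂ) * X ^ (p + 2 * q - 1) := by
    simp only [minor4, hF, Matrix.cons_val_two, Matrix.head_cons, Matrix.cons_val_three,
      Matrix.tail_cons, derivative_X_pow, hpqC]
    rw [aux_pow q (p + q) (p + 2 * q - 1) (by omega) (by omega),
      aux_pow (p + q) q (p + 2 * q - 1) hq (by omega), ← sub_mul, ← C_sub]
    congr 1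
    ring
  have hpairs : pairs4 = ({(0,1),(0,2),(0,3),(1,2),(1,3),(2,3)} : Finset (Fin 4 × Fin 4)) := by
    decide
  refine ⟨⟨?_, ?_, ?_⟩, m01, m02, m03, m12, m13, m23, ?_, ?_⟩
  · subst hB; ext i j
    fin_cases i <;> fin_cases j <;>
      simp [Matrix.transpose_apply, Matrix.neg_apply, Matrix.vecHead, Matrix.vecTail]
  · subst hB
    have : (!![0, 0, 0, (p : ℂ) - q; 0, 0, (p : ℂ) + q, 0; 0, -((p : ℂ) + q), 0, 0;
        (q : ℂ) - p, 0, 0, 0]).det = (((p : ℂ) - q) * ((p : ℂ) + q))^2 := by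
      simp [Matrix.det_succ_row_zero, Fin.sum_univ_succ,
        show (Fin.castSucc 2 : Fin 4) = 2 from rfl, show (Fin.succAbove 3 2 : Fin 4) = 2 from rfl]
      ring
    rw [this]
    exact pow_ne_zero _ (mul_ne_zero hpmq0 hpq0)
  · unfold IsContactCurve
    have : Finset.univ.filter (fun r : Fin 4 × Fin 4 => r.1 < r.2)
        = ({(0,1),(0,2),(0,3),(1,2),(1,3),(2,3)} : Finset (Fin 4 × Fin 4)) := by decide
    rw [this]
    subst hB
    rw [Finset.sum_insert (by decide), Finset.sum_insert (by decide),
      Finset.sum_insert (by decide), Finset.sum_insert (by decide),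
      Finset.sum_insert (by decide), Finset.sum_singleton]
    simp [m01, m02, m03, m12, m13, m23, Matrix.vecHead, Matrix.vecTail]
    ring
  · -- gcd
    set g := pairs4.gcd (fun r => minor4 F r.1 r.2) with hg
    have hdvd1 : g ∣ C (p : ℂ) * X ^ (p - 1) := by
      have h1 := Finset.gcd_dvd (f := fun r : Fin 4 × Fin 4 => minor4 F r.1 r.2)
        (show ((0 : Fin 4), (1 : Fin 4)) ∈ pairs4 by rw [hpairs]; simp)
      rw [← m01, hg]
      exact h1
    have hdvd2 : X ^ (p - 1) ∣ g := by
      refine Finset.dvd_gcd fun r hr => ?_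
      rw [hpairs] at hr
      fin_cases hr <;>
        simp only [m01, m02, m03, m12, m13, m23] <;>
        exact (pow_dvd_pow X (by omega)).mul_left _
    have hdvd1' : g ∣ X ^ (p - 1) :=
      ((isUnit_C.2 (isUnit_iff_ne_zero.2 hp0)).dvd_mul_left).1 hdvd1
    obtain ⟨u, hu⟩ := associated_of_dvd_dvd hdvd2 hdvd1'
    obtain ⟨c, hc, hCc⟩ := Polynomial.isUnit_iff.1 u.isUnit
    refine ⟨c, hc.ne_zero, ?_⟩
    rw [← hu, ← hCc, mul_comm]
  · rw [hpairs]
    simp only [Finset.sup_insert, Finset.sup_singleton, m01, m02, m03, m12, m13, m23]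
    rw [natDegree_C_mul hp0, natDegree_C_mul hq0, natDegree_C_mul hpq0, natDegree_C_mul hqp0,
      natDegree_C_mul hq0, natDegree_C_mul hp0]
    simp only [natDegree_X_pow]
    omega
end

section
/- Unbranched rational null curves exist in every even degree ≥ 4: for every integer p ≥ 1, let F = (1, X^p, X^{p+1}, X^{2p+1}) : Fin 4 → ℂ[X] with minors W_ij = F_i·F_j' − F_j·F_i'. Then X^{p−1} divides every W_ij, and the six polynomials G_ij = W_ij / X^{p−1} satisfy: their gcd is 1, their maximal degree is 2p + 2, they span a ℂ-subspace of ℂ[X] of dimension exactly 5, they satisfy G₀₁·G₂₃ − G₀₂·G₁₃ + G₀₃·G₁₂ = 0 and G₀₁'·G₂₃' − G₀₂'·G₁₃' + G₀₃'·G₁₂' = 0 (so they define a nonlinear null curve of degree 2p+2 in a quadric Q³), and the fifteen pairwise minors G_α·G_β' − G_β·G_α' (over unordered pairs α ≠ β of index pairs) have gcd 1 and maximal degree 4p + 2 = 2(2p+2) − 2 (the curve is unbranched). -/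
open Polynomial

/-! ### Auxiliary machinery -/

/-- A monomial `a·Xⁿ`. -/
noncomputable def mon (a : ℂ) (n : ℕ) : ℂ[X] := C a * X ^ n

/-- The reduced minors of the curve `(1, X^{q+1}, X^{q+2}, X^{2q+3})`. -/
noncomputable def myG (q : ℕ) : Fin 4 → Fin 4 → ℂ[X] :=
  ![![0, mon (q+1) 0, mon (q+2) 1, mon (2*q+3) (q+2)],
    ![-mon (q+1) 0, 0, mon 1 (q+2), mon (q+2) (2*q+3)],
    ![-mon (q+2) 1, -mon 1 (q+2), 0, mon (q+1) (2*q+4)],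
    ![-mon (2*q+3) (q+2), -mon (q+2) (2*q+3), -mon (q+1) (2*q+4), 0]]

lemma g01 (q : ℕ) : myG q 0 1 = mon (q+1) 0 := rfl
lemma g02 (q : ℕ) : myG q 0 2 = mon (q+2) 1 := rfl
lemma g03 (q : ℕ) : myG q 0 3 = mon (2*q+3) (q+2) := rfl
lemma g12 (q : ℕ) : myG q 1 2 = mon 1 (q+2) := rfl
lemma g13 (q : ℕ) : myG q 1 3 = mon (q+2) (2*q+3) := rfl
lemma g23 (q : ℕ) : myG q 2 3 = mon (q+1) (2*q+4) := rfl

lemma hpairs : pairs4 = {((0:Fin 4),(1:Fin 4)), (0,2), (0,3), (1,2), (1,3), (2,3)} := by decide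

lemma hne1 (q : ℕ) : ((q:ℂ)+1) ≠ 0 := by
  have : ((q+1:ℕ):ℂ) ≠ 0 := Nat.cast_ne_zero.2 (by omega); exact_mod_cast this
lemma hne2 (q : ℕ) : ((q:ℂ)+2) ≠ 0 := by
  have : ((q+2:ℕ):ℂ) ≠ 0 := Nat.cast_ne_zero.2 (by omega); exact_mod_cast this
lemma hne3 (q : ℕ) : (2*(q:ℂ)+3) ≠ 0 := by
  have : ((2*q+3:ℕ):ℂ) ≠ 0 := Nat.cast_ne_zero.2 (by omega); exact_mod_cast this

lemma mon_natDegree {a : ℂ} (ha : a ≠ 0) (n : ℕ) : (mon a n).natDegree = n :=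
  natDegree_C_mul_X_pow n a ha

/-- The minor identity: `W_ij = X^q · G_ij`. -/
lemma minor_eq (q : ℕ) (F : Fin 4 → ℂ[X])
    (hF : F = ![1, X ^ (q+1), X ^ (q+1 + 1), X ^ (2 * (q+1) + 1)]) :
    ∀ i j : Fin 4, minor4 F i j = X ^ (q + 1 - 1) * myG q i j := by
  subst hF
  intro i j
  have e1 : ∀ n : ℕ, n + 2 - 1 = n + 1 := fun n => rfl
  have e2 : 2*q+3-1 = 2*q+2 := rfl
  have e3 : 2*q+4-1 = 2*q+3 := rfl
  fin_cases i <;> fin_cases j <;>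
    (simp [minor4, myG, mon, derivative_X_pow, derivative_C_mul_X_pow, Nat.add_sub_cancel,
       e1, e2, e3, map_add, map_mul, map_one, map_natCast, map_ofNat] <;> ring)

/-- The gcd of the reduced minors is `1`. -/
lemma gcd_eq_one (q : ℕ) : pairs4.gcd (fun r => myG q r.1 r.2) = 1 := by
  have hdvd : pairs4.gcd (fun r => myG q r.1 r.2) ∣ myG q 0 1 :=
    Finset.gcd_dvd (b := ((0:Fin 4),(1:Fin 4))) (by decide : ((0:Fin 4),(1:Fin 4)) ∈ pairs4)
  have hu : IsUnit (myG q 0 1) := by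
    rw [g01, mon, pow_zero, mul_one]
    exact isUnit_C.2 (hne1 q).isUnit
  have := isUnit_of_dvd_unit hdvd hu
  rw [← Finset.normalize_gcd, normalize_eq_one.2 this]

/-- The maximal degree of the reduced minors is `2q+4`. -/
lemma sup_eq (q : ℕ) : pairs4.sup (fun r => (myG q r.1 r.2).natDegree) = 2 * (q+1) + 2 := by
  rw [hpairs]
  simp only [Finset.sup_insert, Finset.sup_singleton]
  rw [g01, g02, g03, g12, g13, g23,
    mon_natDegree (hne1 q), mon_natDegree (hne2 q),
    mon_natDegree (hne3 q), mon_natDegree one_ne_zero,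
    mon_natDegree (hne2 q), mon_natDegree (hne1 q)]
  omega

/-- The Plücker relation for the reduced minors. -/
lemma plucker (q : ℕ) :
    myG q 0 1 * myG q 2 3 - myG q 0 2 * myG q 1 3 + myG q 0 3 * myG q 1 2 = 0 := by
  rw [g01, g02, g03, g12, g13, g23]
  simp only [mon]
  simp only [map_add, map_mul, map_one, map_natCast, map_ofNat]
  ring

/-- The Plücker relation for the derivatives of the reduced minors. -/
lemma plucker' (q : ℕ) :
    derivative (myG q 0 1) * derivative (myG q 2 3) -
      derivative (myG q 0 2) * derivative (myG q 1 3) +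
      derivative (myG q 0 3) * derivative (myG q 1 2) = 0 := by
  have e1 : ∀ n : ℕ, n + 2 - 1 = n + 1 := fun n => rfl
  have e2 : 2*q+3-1 = 2*q+2 := rfl
  have e3 : 2*q+4-1 = 2*q+3 := rfl
  rw [g01, g02, g03, g12, g13, g23]
  simp only [mon, derivative_C_mul_X_pow, e1, e2, e3]
  simp only [map_add, map_mul, map_one, map_natCast, map_ofNat]
  push_cast
  ring

/-- The five monomials spanning the reduced minors. -/
noncomputable def vv (q : ℕ) : Fin 5 → ℂ[X] := fun i => X ^ (![0, 1, q+2, 2*q+3, 2*q+4] i)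

lemma vv_li (q : ℕ) : LinearIndependent ℂ (vv q) := by
  have hinj : Function.Injective (fun i => (![0, 1, q+2, 2*q+3, 2*q+4] : Fin 5 → ℕ) i) := by
    intro a b hab
    fin_cases a <;> fin_cases b <;> simp_all <;> omega
  have := (Polynomial.basisMonomials ℂ).linearIndependent.comp _ hinj
  convert this using 1
  funext i
  simp [vv, X_pow_eq_monomial]

lemma mem_span_of_smul {s : Set ℂ[X]} {v : ℂ[X]} (c : ℂ) (hv : v ∈ s) {P : ℂ[X]}
    (h : P = c • v) : P ∈ Submodule.span ℂ s :=
  h ▸ Submodule.smul_mem _ c (Submodule.subset_span hv)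

lemma smul_X_pow (a : ℂ) (n : ℕ) : mon a n = a • (X ^ n : ℂ[X]) := by
  simp [mon, Polynomial.smul_eq_C_mul]

lemma inv_smul_mon {a : ℂ} (ha : a ≠ 0) (n : ℕ) : (X ^ n : ℂ[X]) = a⁻¹ • mon a n := by
  simp [mon, Polynomial.smul_eq_C_mul, ← mul_assoc, ← C_mul, inv_mul_cancel₀ ha]

/-- The reduced minors span a space of dimension `5`. -/
lemma finrank_span (q : ℕ) :
    Module.finrank ℂ
      ↥(Submodule.span ℂ {P : ℂ[X] | ∃ i j : Fin 4, i < j ∧ P = myG q i j}) = 5 := by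
  set s : Set ℂ[X] := {P : ℂ[X] | ∃ i j : Fin 4, i < j ∧ P = myG q i j} with hs
  have m01 : myG q 0 1 ∈ Submodule.span ℂ (Set.range (vv q)) :=
    mem_span_of_smul _ (Set.mem_range_self 0) ((g01 q).trans (smul_X_pow _ _))
  have m02 : myG q 0 2 ∈ Submodule.span ℂ (Set.range (vv q)) :=
    mem_span_of_smul _ (Set.mem_range_self 1) ((g02 q).trans (smul_X_pow _ _))
  have m03 : myG q 0 3 ∈ Submodule.span ℂ (Set.range (vv q)) :=
    mem_span_of_smul _ (Set.mem_range_self 2) ((g03 q).trans (smul_X_pow _ _))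
  have m12 : myG q 1 2 ∈ Submodule.span ℂ (Set.range (vv q)) :=
    mem_span_of_smul _ (Set.mem_range_self 2) ((g12 q).trans (smul_X_pow _ _))
  have m13 : myG q 1 3 ∈ Submodule.span ℂ (Set.range (vv q)) :=
    mem_span_of_smul _ (Set.mem_range_self 3) ((g13 q).trans (smul_X_pow _ _))
  have m23 : myG q 2 3 ∈ Submodule.span ℂ (Set.range (vv q)) :=
    mem_span_of_smul _ (Set.mem_range_self 4) ((g23 q).trans (smul_X_pow _ _))
  have hspan : Submodule.span ℂ s = Submodule.span ℂ (Set.range (vv q)) := by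
    apply le_antisymm
    · rw [Submodule.span_le]
      rintro P ⟨i, j, hij, rfl⟩
      rw [SetLike.mem_coe]
      generalize myG q = G at m01 m02 m03 m12 m13 m23 ⊢
      fin_cases i <;> fin_cases j <;> first
        | exact absurd hij (by decide)
        | exact m01 | exact m02 | exact m03 | exact m12 | exact m13 | exact m23
    · rw [Submodule.span_le]
      rintro P ⟨k, rfl⟩
      rw [SetLike.mem_coe]
      fin_cases k
      · exact mem_span_of_smul _
          (show myG q 0 1 ∈ s from ⟨0, 1, by decide, rfl⟩)
          (by rw [g01]; exact inv_smul_mon (hne1 q) 0)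
      · exact mem_span_of_smul _
          (show myG q 0 2 ∈ s from ⟨0, 2, by decide, rfl⟩)
          (by rw [g02]; exact inv_smul_mon (hne2 q) 1)
      · exact mem_span_of_smul _
          (show myG q 1 2 ∈ s from ⟨1, 2, by decide, rfl⟩)
          (by rw [g12]; exact inv_smul_mon one_ne_zero (q+2))
      · exact mem_span_of_smul _
          (show myG q 1 3 ∈ s from ⟨1, 3, by decide, rfl⟩)
          (by rw [g13]; exact inv_smul_mon (hne2 q) (2*q+3))
      · exact mem_span_of_smul _
          (show myG q 2 3 ∈ s from ⟨2, 3, by decide, rfl⟩)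
          (by rw [g23]; exact inv_smul_mon (hne1 q) (2*q+4))
  rw [hspan, finrank_span_eq_card (vv_li q)]
  simp

lemma deg_le (q : ℕ) : ∀ r ∈ pairs4, (myG q r.1 r.2).natDegree ≤ 2*q+4 ∧
    (r ≠ ((2:Fin 4),(3:Fin 4)) → (myG q r.1 r.2).natDegree ≤ 2*q+3) := by
  intro r hr
  rw [hpairs] at hr
  fin_cases hr
  · rw [g01, mon_natDegree (hne1 q)]; omega
  · rw [g02, mon_natDegree (hne2 q)]; omega
  · rw [g03, mon_natDegree (hne3 q)]; omega
  · rw [g12, mon_natDegree one_ne_zero]; omega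
  · rw [g13, mon_natDegree (hne2 q)]; omega
  · rw [g23, mon_natDegree (hne1 q)]
    exact ⟨le_refl _, fun h => absurd rfl h⟩

/-- The second minors are coprime. -/
lemma gcd2_eq_one (q : ℕ) :
    ((pairs4 ×ˢ pairs4).filter (fun r => r.1 ≠ r.2)).gcd
      (fun r => myG q r.1.1 r.1.2 * derivative (myG q r.2.1 r.2.2) -
        myG q r.2.1 r.2.2 * derivative (myG q r.1.1 r.1.2)) = 1 := by
  have hmem : (((0:Fin 4),(1:Fin 4)), ((0:Fin 4),(2:Fin 4))) ∈
      ((pairs4 ×ˢ pairs4).filter (fun r => r.1 ≠ r.2)) := by decide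
  have hdvd := Finset.gcd_dvd (f := fun r => myG q r.1.1 r.1.2 * derivative (myG q r.2.1 r.2.2) -
        myG q r.2.1 r.2.2 * derivative (myG q r.1.1 r.1.2)) hmem
  have hval : myG q 0 1 * derivative (myG q 0 2) - myG q 0 2 * derivative (myG q 0 1)
      = C (((q:ℂ)+1) * ((q:ℂ)+2)) := by
    rw [g01, g02]
    simp only [mon, derivative_C_mul_X_pow]
    simp only [map_add, map_mul, map_one, map_natCast, map_ofNat]
    push_cast
    ring
  beta_reduce at hdvd
  rw [hval] at hdvd
  have hu : IsUnit (C (((q:ℂ)+1) * ((q:ℂ)+2))) :=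
    isUnit_C.2 (mul_ne_zero (hne1 q) (hne2 q)).isUnit
  have := isUnit_of_dvd_unit hdvd hu
  rw [← Finset.normalize_gcd, normalize_eq_one.2 this]

/-- The maximal degree of the second minors is `4q+6`. -/
lemma sup2_eq (q : ℕ) :
    ((pairs4 ×ˢ pairs4).filter (fun r => r.1 ≠ r.2)).sup
      (fun r => (myG q r.1.1 r.1.2 * derivative (myG q r.2.1 r.2.2) -
        myG q r.2.1 r.2.2 * derivative (myG q r.1.1 r.1.2)).natDegree) = 4*(q+1)+2 := by
  apply le_antisymm
  · apply Finset.sup_le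
    rintro ⟨r, s⟩ hrs
    simp only [Finset.mem_filter, Finset.mem_product] at hrs
    obtain ⟨⟨hr, hs⟩, hne⟩ := hrs
    obtain ⟨hr4, hr3⟩ := deg_le q r hr
    obtain ⟨hs4, hs3⟩ := deg_le q s hs
    have hone : (myG q r.1 r.2).natDegree ≤ 2*q+3 ∨ (myG q s.1 s.2).natDegree ≤ 2*q+3 := by
      by_cases h : r = ((2:Fin 4),(3:Fin 4))
      · right; exact hs3 (by rw [h] at hne; exact fun hh => hne (hh ▸ rfl) )
      · left; exact hr3 h
    set A := myG q r.1 r.2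
    set B := myG q s.1 s.2
    calc (A * derivative B - B * derivative A).natDegree
        ≤ max (A * derivative B).natDegree (B * derivative A).natDegree :=
          natDegree_sub_le _ _
      _ ≤ 4*(q+1)+2 := by
          apply max_le
          · calc (A * derivative B).natDegree ≤ A.natDegree + (derivative B).natDegree :=
                natDegree_mul_le
              _ ≤ A.natDegree + (B.natDegree - 1) :=
                Nat.add_le_add_left (natDegree_derivative_le B) _
              _ ≤ 4*(q+1)+2 := by omega
          · calc (B * derivative A).natDegree ≤ B.natDegree + (derivative A).natDegree :=
                natDegree_mul_le
              _ ≤ B.natDegree + (A.natDegree - 1) :=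
                Nat.add_le_add_left (natDegree_derivative_le A) _
              _ ≤ 4*(q+1)+2 := by omega
  · have hmem : (((1:Fin 4),(3:Fin 4)), ((2:Fin 4),(3:Fin 4))) ∈
        ((pairs4 ×ˢ pairs4).filter (fun r => r.1 ≠ r.2)) := by decide
    have hval : myG q 1 3 * derivative (myG q 2 3) - myG q 2 3 * derivative (myG q 1 3)
        = mon (((q:ℂ)+1)*((q:ℂ)+2)) (4*q+6) := by
      rw [g13, g23]
      have e2 : 2*q+3-1 = 2*q+2 := rfl
      have e3 : 2*q+4-1 = 2*q+3 := rfl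
      simp only [mon, derivative_C_mul_X_pow, e2, e3]
      simp only [map_add, map_mul, map_one, map_natCast, map_ofNat]
      push_cast
      ring
    have := Finset.le_sup (f := fun r => (myG q r.1.1 r.1.2 * derivative (myG q r.2.1 r.2.2) -
        myG q r.2.1 r.2.2 * derivative (myG q r.1.1 r.1.2)).natDegree) hmem
    beta_reduce at this
    rw [hval, mon_natDegree (mul_ne_zero (hne1 q) (hne2 q))] at this
    omega

/-- Unbranched rational null curves exist in every even degree `≥ 4`: for every 
`p ≥ 1`, dividing the minors of `F = (1, X^p, X^{p+1}, X^{2p+1})` by `X^{p−1}` 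
yields a coprime tuple defining an unbranched nonlinear null curve of degree 
`2p + 2` in the Plücker quadric `Q³`. -/
theorem unbranched_null_curves_even_degrees (p : ℕ) (hp : 1 ≤ p)
    (F : Fin 4 → ℂ[X]) (hF : F = ![1, X ^ p, X ^ (p + 1), X ^ (2 * p + 1)]) :
    (∀ i j : Fin 4, X ^ (p - 1) ∣ minor4 F i j) ∧
    ∃ G : Fin 4 → Fin 4 → ℂ[X],
      (∀ i j : Fin 4, minor4 F i j = X ^ (p - 1) * G i j) ∧
      pairs4.gcd (fun r => G r.1 r.2) = 1 ∧
      pairs4.sup (fun r => (G r.1 r.2).natDegree) = 2 * p + 2 ∧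
      Module.finrank ℂ
        ↥(Submodule.span ℂ {P : ℂ[X] | ∃ i j : Fin 4, i < j ∧ P = G i j}) = 5 ∧
      G 0 1 * G 2 3 - G 0 2 * G 1 3 + G 0 3 * G 1 2 = 0 ∧
      derivative (G 0 1) * derivative (G 2 3) -
        derivative (G 0 2) * derivative (G 1 3) +
        derivative (G 0 3) * derivative (G 1 2) = 0 ∧
      ((pairs4 ×ˢ pairs4).filter (fun r => r.1 ≠ r.2)).gcd
        (fun r => G r.1.1 r.1.2 * derivative (G r.2.1 r.2.2) -
          G r.2.1 r.2.2 * derivative (G r.1.1 r.1.2)) = 1 ∧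
      ((pairs4 ×ˢ pairs4).filter (fun r => r.1 ≠ r.2)).sup
        (fun r => (G r.1.1 r.1.2 * derivative (G r.2.1 r.2.2) -
          G r.2.1 r.2.2 * derivative (G r.1.1 r.1.2)).natDegree) = 4 * p + 2 := by
  obtain ⟨q, rfl⟩ : ∃ q, p = q + 1 := ⟨p - 1, by omega⟩
  have hmin := minor_eq q F hF
  exact ⟨fun i j => ⟨myG q i j, hmin i j⟩, myG q, hmin, gcd_eq_one q, sup_eq q,
    finrank_span q, plucker q, plucker' q, gcd2_eq_one q, sup2_eq q⟩
end
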